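/- Let F and F̂ be two finite subsets of Z^d (d ≥ 3), and suppose there is a bijection f̂ : F → F̂ such that |f̂(x) - f̂(y)|_∞ ≥ (1/2)|x - y|_∞ for all x, y in F. Then cap(F̂) ≥ cap(F)/c_**, where c_** = sup{ g(0,ŷ)/g(0,y) : y, ŷ ∈ Z^d, |ŷ|_∞ ≥ (1/2)|y|_∞ } is a finite dimension-dependent constant. -/

import Mathlib

open scoped Classical
open Filter

noncomputable section

abbrev V (d : ℕ) := Fin d → ℤ

variable {d : ℕ}

/-- sup-norm of a lattice point. -/
def supNorm (x : V d) : ℕ := Finset.univ.sup fun i => (x i).natAbs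

/-- ℓ¹-norm of a lattice point. -/
def l1Norm (x : V d) : ℕ := ∑ i, (x i).natAbs

/-- Euclidean norm of a lattice point. -/
def eNorm (x : V d) : ℝ := Real.sqrt (∑ i, ((x i : ℝ)) ^ 2)

/-- closed sup-norm ball `B(x,r)` as a `Finset`. -/
def ball (x : V d) (r : ℤ) : Finset (V d) := Fintype.piFinset fun i => Finset.Icc (x i - r) (x i + r)

/-- box of side `L` with base point `x`. -/
def box (x : V d) (L : ℤ) : Finset (V d) := Fintype.piFinset fun i => Finset.Ico (x i) (x i + L)

/-- nearest neighbours of `x` in `ℤ^d`. -/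
def nbrs (x : V d) : Finset (V d) :=
  (Finset.univ : Finset (Fin d × Bool)).image
    fun p => Function.update x p.1 (x p.1 + if p.2 then 1 else -1)

/-- `n`-step transition probability of the simple random walk on `ℤ^d`. -/
def step (d : ℕ) : ℕ → V d → V d → ℝ
  | 0, x, y => if x = y then 1 else 0
  | n+1, x, y => ∑ z ∈ nbrs x, (1 / (2 * (d : ℝ))) * step d n z y

/-- Green function of the simple random walk on `ℤ^d` (`d ≥ 3`); for the
continuous-time walk with unit jump rate it coincides with the expected number of
visits of the discrete-time walk. -/
def green (x y : V d) : ℝ := ∑' n, step d n x y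

/-- `n`-step transition probability of the walk killed outside `U`. -/
def stepK (d : ℕ) (U : Set (V d)) : ℕ → V d → V d → ℝ
  | 0, x, y => if x = y ∧ x ∈ U then 1 else 0
  | n+1, x, y => if x ∈ U then ∑ z ∈ nbrs x, (1 / (2 * (d : ℝ))) * stepK d U n z y else 0

/-- Green function of the walk killed outside `U`. -/
def greenK (U : Set (V d)) (x y : V d) : ℝ := ∑' n, stepK d U n x y

/-- probability of entering `F` within `n` steps and before exiting `U`. -/
def hitBE (F : Finset (V d)) (U : Set (V d)) : ℕ → V d → ℝ
  | 0, x => if x ∈ F then 1 else 0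
  | n+1, x => if x ∈ F then 1 else
      if x ∈ U then ∑ z ∈ nbrs x, (1 / (2 * (d : ℝ))) * hitBE F U n z else 0

/-- `P_x[H_F < T_U]`. -/
def hitBeforeExit (F : Finset (V d)) (U : Set (V d)) (x : V d) : ℝ := ⨆ n, hitBE F U n x

/-- `P_x[H_F < ∞]`. -/
def hitProb (F : Finset (V d)) (x : V d) : ℝ := hitBeforeExit F Set.univ x

/-- equilibrium measure `e_A(x) = P_x[H̃_A = ∞] 1_A(x)`. -/
def eqm (A : Finset (V d)) (x : V d) : ℝ :=
  if x ∈ A then ∑ z ∈ nbrs x, (1 / (2 * (d : ℝ))) * (1 - hitProb A z) else 0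

/-- capacity of a finite set. -/
def capa (A : Finset (V d)) : ℝ := ∑ x ∈ A, eqm A x

/-- local density `σ_m(x)` of `U₁` in `B(x, 2^m L₁)`. -/
def dens (U₁ : Set (V d)) (L₁ : ℤ) (m : ℕ) (x : V d) : ℝ :=
  (((ball x (2 ^ m * L₁)).filter (· ∈ U₁)).card : ℝ) / ((ball x (2 ^ m * L₁)).card : ℝ)

/-- average of `f` over `B(x,r)` w.r.t. the normalized counting measure. -/
def ballAvg (x : V d) (r : ℤ) (f : V d → ℝ) : ℝ :=
  (∑ y ∈ ball x r, f y) / ((ball x r).card : ℝ)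

/-- `m_{x,r}`-measure of `{y : P y}`. -/
def frac (x : V d) (r : ℤ) (P : V d → Prop) : ℝ :=
  (((ball x r).filter P).card : ℝ) / ((ball x r).card : ℝ)

section Basics

variable {d : ℕ}

lemma nbrs_map_inj (x : V d) :
    Set.InjOn (fun p : Fin d × Bool => Function.update x p.1 (x p.1 + if p.2 then 1 else -1))
      Set.univ := by
  rintro ⟨i, b⟩ - ⟨j, c⟩ - h
  simp only at h
  by_cases hij : i = j
  · subst hij
    have := congrFun h i
    simp [Function.update_self] at this
    cases b <;> cases c <;> simp_all <;> omega
  · have h1 := congrFun h i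
    simp only [Function.update_self, Function.update_of_ne hij] at h1
    cases b <;> simp at h1 <;> omega

lemma nbrs_card (x : V d) : (nbrs x).card = 2 * d := by
  rw [nbrs, Finset.card_image_of_injOn (by simpa using nbrs_map_inj x)]
  simp [Finset.card_univ, Nat.mul_comm]

lemma sum_nbrs_const (x : V d) (c : ℝ) : ∑ _z ∈ nbrs x, c = (2 * d : ℝ) * c := by
  rw [Finset.sum_const, nbrs_card]
  push_cast [nsmul_eq_mul]
  ring

lemma p_nonneg : (0:ℝ) ≤ 1 / (2 * (d : ℝ)) := by positivity

lemma sum_p_eq_one (hd : d ≠ 0) (x : V d) :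
    ∑ _z ∈ nbrs x, (1 / (2 * (d : ℝ))) = 1 := by
  rw [sum_nbrs_const]
  have : (d:ℝ) ≠ 0 := Nat.cast_ne_zero.mpr hd
  field_simp

lemma step_nonneg (n : ℕ) (x y : V d) : 0 ≤ step d n x y := by
  induction n generalizing x with
  | zero => simp [step]; positivity
  | succ n ih =>
    rw [step]
    exact Finset.sum_nonneg fun z _ => mul_nonneg p_nonneg (ih z)

lemma green_nonneg (x y : V d) : 0 ≤ green x y :=
  tsum_nonneg fun n => step_nonneg n x y

end Basics

section Sym

variable {d : ℕ}

lemma update_add (x v : V d) (i : Fin d) (c : ℤ) :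
    Function.update x i (x i + c) + v = Function.update (x + v) i ((x + v) i + c) := by
  funext j
  by_cases hj : j = i
  · subst hj; simp [Pi.add_apply]; ring
  · simp [Function.update_of_ne hj, Pi.add_apply]

lemma mem_nbrs {x z : V d} :
    z ∈ nbrs x ↔ ∃ i : Fin d, ∃ c : ℤ, (c = 1 ∨ c = -1) ∧
      z = Function.update x i (x i + c) := by
  simp only [nbrs, Finset.mem_image, Finset.mem_univ, true_and, Prod.exists]
  constructor
  · rintro ⟨i, b, rfl⟩
    exact ⟨i, if b then 1 else -1, by cases b <;> simp⟩
  · rintro ⟨i, c, hc | hc, rfl⟩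
    · exact ⟨i, true, by simp [hc]⟩
    · exact ⟨i, false, by simp [hc]⟩

lemma nbrs_symm {x z : V d} (h : z ∈ nbrs x) : x ∈ nbrs z := by
  rw [mem_nbrs] at h ⊢
  obtain ⟨i, c, hc, rfl⟩ := h
  refine ⟨i, -c, by rcases hc with h | h <;> simp [h], ?_⟩
  funext j
  by_cases hj : j = i
  · subst hj; simp
  · simp [Function.update_of_ne hj]

lemma step_succ_right (n : ℕ) (x y : V d) :
    step d (n+1) x y = ∑ z ∈ nbrs y, (1 / (2 * (d : ℝ))) * step d n x z := by
  induction n generalizing x y with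
  | zero =>
    simp only [step, mul_ite, mul_one, mul_zero]
    rw [Finset.sum_ite_eq' (nbrs x) y fun _ => (1 / (2 * (d : ℝ)))]
    rw [Finset.sum_ite_eq (nbrs y) x fun _ => (1 / (2 * (d : ℝ)))]
    by_cases h : y ∈ nbrs x
    · rw [if_pos h, if_pos (nbrs_symm h)]
    · rw [if_neg h, if_neg (fun hc => h (nbrs_symm hc))]
  | succ n ih =>
    calc step d (n+1+1) x y
        = ∑ z ∈ nbrs x, (1 / (2 * (d : ℝ))) * step d (n+1) z y := rfl
      _ = ∑ z ∈ nbrs x, ∑ w ∈ nbrs y,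
            (1 / (2 * (d : ℝ))) * ((1 / (2 * (d : ℝ))) * step d n z w) := by
          refine Finset.sum_congr rfl fun z _ => ?_
          rw [ih z y, Finset.mul_sum]
      _ = ∑ w ∈ nbrs y, ∑ z ∈ nbrs x,
            (1 / (2 * (d : ℝ))) * ((1 / (2 * (d : ℝ))) * step d n z w) := Finset.sum_comm
      _ = ∑ w ∈ nbrs y, (1 / (2 * (d : ℝ))) * step d (n+1) x w := by
          refine Finset.sum_congr rfl fun w _ => ?_
          rw [show step d (n+1) x w = ∑ z ∈ nbrs x, (1 / (2 * (d : ℝ))) * step d n z w from rfl,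
            Finset.mul_sum]

lemma step_symm (n : ℕ) (x y : V d) : step d n x y = step d n y x := by
  induction n generalizing x y with
  | zero => simp [step, eq_comm]
  | succ n ih =>
    rw [step_succ_right]
    exact Finset.sum_congr rfl fun z _ => by rw [ih]

lemma green_symm (x y : V d) : green x y = green y x := by
  unfold green
  exact tsum_congr fun n => step_symm n x y

lemma nbrs_add (x v : V d) : nbrs (x + v) = (nbrs x).image (· + v) := by
  ext z
  constructor
  · intro hz
    obtain ⟨i, c, hc, rfl⟩ := mem_nbrs.mp hz
    refine Finset.mem_image.mpr ⟨Function.update x i (x i + c),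
      mem_nbrs.mpr ⟨i, c, hc, rfl⟩, update_add x v i c⟩
  · intro hz
    obtain ⟨w, hw, rfl⟩ := Finset.mem_image.mp hz
    obtain ⟨i, c, hc, rfl⟩ := mem_nbrs.mp hw
    exact mem_nbrs.mpr ⟨i, c, hc, update_add x v i c⟩

lemma step_add (n : ℕ) (x y v : V d) : step d n (x + v) (y + v) = step d n x y := by
  induction n generalizing x y with
  | zero => simp [step, add_left_inj]
  | succ n ih =>
    rw [step, step, nbrs_add]
    rw [Finset.sum_image (by
      intro a _ b _ hab
      funext j
      have := congrFun hab j
      simpa using this)]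
    exact Finset.sum_congr rfl fun z _ => by rw [ih]

lemma green_eq_zero_sub (x y : V d) : green x y = green 0 (y - x) := by
  unfold green
  refine tsum_congr fun n => ?_
  have := step_add n 0 (y - x) x
  simpa using this

end Sym

section Reach

variable {d : ℕ}

lemma p_pos (hd : d ≠ 0) : (0:ℝ) < 1 / (2 * (d : ℝ)) := by
  have : (0:ℝ) < (d:ℝ) := by exact_mod_cast Nat.pos_of_ne_zero hd
  positivity

lemma step_exists_pos (hd : d ≠ 0) (x y : V d) : ∃ n, 0 < step d n x y := by
  generalize hk : l1Norm (y - x) = k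
  induction k generalizing x with
  | zero =>
    have hxy : x = y := by
      funext i
      have h0 : ((y - x) i).natAbs = 0 := by
        unfold l1Norm at hk
        exact Finset.sum_eq_zero_iff.mp hk i (Finset.mem_univ i)
      have h0' : (y i - x i).natAbs = 0 := h0
      omega
    exact ⟨0, by simp [hxy, step]⟩
  | succ k ih =>
    have hne : x ≠ y := by
      intro h; subst h; simp [l1Norm] at hk
    obtain ⟨i, hi⟩ : ∃ i, x i ≠ y i := by
      by_contra h
      push_neg at h
      exact hne (funext h)
    set c : ℤ := if x i < y i then 1 else -1 with hc
    set z : V d := Function.update x i (x i + c) with hz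
    have hzmem : z ∈ nbrs x :=
      mem_nbrs.mpr ⟨i, c, by by_cases h : x i < y i <;> simp [hc, h], rfl⟩
    have hl1 : l1Norm (y - z) = k := by
      have key : ((y i - (x i + c)).natAbs) + 1 = (y i - x i).natAbs := by
        by_cases h : x i < y i <;> simp [hc, h] <;> omega
      have hgi : (y - z) i = y i - (x i + c) := by simp [hz, Pi.sub_apply]
      have e1 : l1Norm (y - z) =
          (∑ j ∈ Finset.univ.erase i, ((y - x) j).natAbs) + (y i - (x i + c)).natAbs := by
        unfold l1Norm
        rw [← Finset.sum_erase_add _ _ (Finset.mem_univ i), hgi]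
        congr 1
        refine Finset.sum_congr rfl fun j hj => ?_
        have hj' : j ≠ i := Finset.ne_of_mem_erase hj
        simp [hz, Pi.sub_apply, Function.update_of_ne hj']
      have e2 : l1Norm (y - x) =
          (∑ j ∈ Finset.univ.erase i, ((y - x) j).natAbs) + (y i - x i).natAbs := by
        unfold l1Norm
        rw [← Finset.sum_erase_add _ _ (Finset.mem_univ i)]
        rfl
      omega
    obtain ⟨n, hn⟩ := ih z hl1
    refine ⟨n + 1, ?_⟩
    rw [step]
    have hterm : 0 < (1 / (2 * (d:ℝ))) * step d n z y := mul_pos (p_pos hd) hn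
    refine lt_of_lt_of_le hterm ?_
    exact Finset.single_le_sum (fun w _ => mul_nonneg p_nonneg (step_nonneg n w y)) hzmem

lemma step_add_left_ge (a n : ℕ) (x x' y : V d) :
    step d a x' x * step d n x y ≤ step d (a + n) x' y := by
  induction a generalizing x' with
  | zero =>
    simp only [step, Nat.zero_add]
    by_cases h : x' = x
    · subst h; simp
    · simp [h, step_nonneg]
  | succ a ih =>
    have : step d (a + 1 + n) x' y = ∑ z ∈ nbrs x', (1 / (2 * (d:ℝ))) * step d (a + n) z y := by
      rw [show a + 1 + n = (a + n) + 1 by ring]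
      rfl
    rw [this, step, Finset.sum_mul]
    refine Finset.sum_le_sum fun z _ => ?_
    rw [mul_assoc]
    exact mul_le_mul_of_nonneg_left (ih z) p_nonneg

lemma step_add_right_ge (n b : ℕ) (x y y' : V d) :
    step d n x y * step d b y y' ≤ step d (n + b) x y' := by
  induction b generalizing y' with
  | zero =>
    simp only [step, Nat.add_zero]
    by_cases h : y = y'
    · subst h; simp
    · simp [h, step_nonneg]
  | succ b ih =>
    rw [show n + (b + 1) = (n + b) + 1 by ring, step_succ_right, step_succ_right,
      Finset.mul_sum]
    refine Finset.sum_le_sum fun z _ => ?_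
    calc step d n x y * ((1 / (2 * (d:ℝ))) * step d b y z)
        = (1 / (2 * (d:ℝ))) * (step d n x y * step d b y z) := by ring
      _ ≤ (1 / (2 * (d:ℝ))) * step d (n + b) x z :=
          mul_le_mul_of_nonneg_left (ih z) p_nonneg

lemma summable_transfer (hd : d ≠ 0) {x y x' y' : V d}
    (h : Summable fun n => step d n x' y') :
    Summable fun n => step d n x y := by
  obtain ⟨a, ha⟩ := step_exists_pos hd x' x
  obtain ⟨b, hb⟩ := step_exists_pos hd y y'
  have hsub : Summable fun n => step d (a + n + b) x' y' :=
    h.comp_injective (i := fun n : ℕ => a + n + b) (fun m n hmn => by simp only at hmn; omega)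
  have hc : 0 < step d a x' x * step d b y y' := mul_pos ha hb
  refine Summable.of_nonneg_of_le (fun n => step_nonneg n x y)
    (fun n => ?_) (hsub.mul_left (step d a x' x * step d b y y')⁻¹)
  have key : step d a x' x * step d n x y * step d b y y' ≤ step d (a + n + b) x' y' :=
    calc step d a x' x * step d n x y * step d b y y'
        ≤ step d (a + n) x' y * step d b y y' :=
          mul_le_mul_of_nonneg_right (step_add_left_ge a n x x' y) (step_nonneg b y y')
      _ ≤ step d (a + n + b) x' y' := step_add_right_ge (a+n) b x' y y'
  rw [inv_mul_eq_div, le_div_iff₀ hc]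
  calc step d n x y * (step d a x' x * step d b y y')
      = step d a x' x * step d n x y * step d b y y' := by ring
    _ ≤ step d (a + n + b) x' y' := key

end Reach

section Hit

variable {d : ℕ}

lemma hitBE_nonneg (A : Finset (V d)) (U : Set (V d)) (n : ℕ) (x : V d) :
    0 ≤ hitBE A U n x := by
  induction n generalizing x with
  | zero => rw [hitBE]; positivity
  | succ n ih =>
    rw [hitBE]
    split
    · norm_num
    split
    · exact Finset.sum_nonneg fun z _ => mul_nonneg p_nonneg (ih z)
    · exact le_refl _

lemma hitBE_le_one (hd : d ≠ 0) (A : Finset (V d)) (U : Set (V d)) (n : ℕ) (x : V d) :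
    hitBE A U n x ≤ 1 := by
  induction n generalizing x with
  | zero => rw [hitBE]; split <;> norm_num
  | succ n ih =>
    rw [hitBE]
    split
    · exact le_refl _
    split
    · calc ∑ z ∈ nbrs x, (1 / (2 * (d:ℝ))) * hitBE A U n z
          ≤ ∑ z ∈ nbrs x, (1 / (2 * (d:ℝ))) * 1 :=
            Finset.sum_le_sum fun z _ => mul_le_mul_of_nonneg_left (ih z) p_nonneg
        _ = 1 := by simpa using sum_p_eq_one hd x
    · norm_num

lemma hitBE_mono (A : Finset (V d)) (U : Set (V d)) (n : ℕ) (x : V d) :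
    hitBE A U n x ≤ hitBE A U (n+1) x := by
  induction n generalizing x with
  | zero =>
    rw [hitBE, hitBE]
    split
    · exact le_refl _
    · split
      · exact Finset.sum_nonneg fun z _ => mul_nonneg p_nonneg (hitBE_nonneg A U 0 z)
      · exact le_refl _
  | succ n ih =>
    rw [hitBE, show hitBE A U (n+1+1) x = if x ∈ A then 1 else
        if x ∈ U then ∑ z ∈ nbrs x, (1 / (2 * (d : ℝ))) * hitBE A U (n+1) z else 0 from rfl]
    split
    · exact le_refl _
    split
    · exact Finset.sum_le_sum fun z _ => mul_le_mul_of_nonneg_left (ih z) p_nonneg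
    · exact le_refl _

lemma hitBE_monotone (A : Finset (V d)) (U : Set (V d)) (x : V d) :
    Monotone fun n => hitBE A U n x :=
  monotone_nat_of_le_succ fun n => hitBE_mono A U n x

lemma hitBE_bddAbove (hd : d ≠ 0) (A : Finset (V d)) (U : Set (V d)) (x : V d) :
    BddAbove (Set.range fun n => hitBE A U n x) :=
  ⟨1, by rintro r ⟨n, rfl⟩; exact hitBE_le_one hd A U n x⟩

lemma tendsto_hitBE (hd : d ≠ 0) (A : Finset (V d)) (x : V d) :
    Filter.Tendsto (fun n => hitBE A Set.univ n x) Filter.atTop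
      (nhds (hitProb A x)) :=
  tendsto_atTop_ciSup (hitBE_monotone A Set.univ x) (hitBE_bddAbove hd A Set.univ x)

lemma hitProb_le_one (hd : d ≠ 0) (A : Finset (V d)) (x : V d) : hitProb A x ≤ 1 :=
  ciSup_le fun n => hitBE_le_one hd A Set.univ n x

lemma hitProb_nonneg (hd : d ≠ 0) (A : Finset (V d)) (x : V d) : 0 ≤ hitProb A x :=
  le_trans (hitBE_nonneg A Set.univ 0 x)
    (le_ciSup (hitBE_bddAbove hd A Set.univ x) 0)

lemma eqm_nonneg (hd : d ≠ 0) (A : Finset (V d)) (x : V d) : 0 ≤ eqm A x := by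
  rw [eqm]
  split
  · exact Finset.sum_nonneg fun z _ => mul_nonneg p_nonneg
      (by linarith [hitProb_le_one hd A z])
  · exact le_refl _

lemma capa_nonneg (hd : d ≠ 0) (A : Finset (V d)) : 0 ≤ capa A :=
  Finset.sum_nonneg fun x _ => eqm_nonneg hd A x

lemma hitBE_of_mem (A : Finset (V d)) (U : Set (V d)) (n : ℕ) {x : V d} (hx : x ∈ A) :
    hitBE A U n x = 1 := by
  cases n with
  | zero => rw [hitBE, if_pos hx]
  | succ n => rw [hitBE, if_pos hx]

end Hit

section Avoid

variable {d : ℕ}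

/-- probability of avoiding `A` during steps `1..m`. -/
def avoidP (A : Finset (V d)) : ℕ → V d → ℝ
  | 0, _ => 1
  | m+1, y => ∑ z ∈ nbrs y, (1 / (2 * (d : ℝ))) * (if z ∈ A then 0 else avoidP A m z)

lemma avoidP_nonneg (A : Finset (V d)) (m : ℕ) (y : V d) : 0 ≤ avoidP A m y := by
  induction m generalizing y with
  | zero => rw [avoidP]; norm_num
  | succ m ih =>
    rw [avoidP]
    refine Finset.sum_nonneg fun z _ => mul_nonneg p_nonneg ?_
    split
    · exact le_refl _
    · exact ih z

lemma avoidP_le_one (hd : d ≠ 0) (A : Finset (V d)) (m : ℕ) (y : V d) :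
    avoidP A m y ≤ 1 := by
  induction m generalizing y with
  | zero => rw [avoidP]
  | succ m ih =>
    rw [avoidP]
    calc ∑ z ∈ nbrs y, (1 / (2 * (d:ℝ))) * (if z ∈ A then 0 else avoidP A m z)
        ≤ ∑ z ∈ nbrs y, (1 / (2 * (d:ℝ))) * 1 := by
          refine Finset.sum_le_sum fun z _ => mul_le_mul_of_nonneg_left ?_ p_nonneg
          split
          · norm_num
          · exact ih z
      _ = 1 := by simpa using sum_p_eq_one hd y

/-- `1 - P_z[H_A ≤ m] = 1_{z ∉ A} · avoidP m z`. -/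
lemma one_sub_hitBE (hd : d ≠ 0) (A : Finset (V d)) (m : ℕ) (z : V d) :
    1 - hitBE A Set.univ m z = if z ∈ A then 0 else avoidP A m z := by
  induction m generalizing z with
  | zero =>
    rw [hitBE, avoidP]
    split <;> norm_num
  | succ m ih =>
    rw [hitBE, avoidP]
    by_cases hz : z ∈ A
    · rw [if_pos hz, if_pos hz]; norm_num
    · rw [if_neg hz, if_neg hz, if_pos (Set.mem_univ z)]
      have h2 : ∑ w ∈ nbrs z, (1/(2*(d:ℝ))) * (if w ∈ A then 0 else avoidP A m w)
          = ∑ w ∈ nbrs z, (1/(2*(d:ℝ))) * (1 - hitBE A Set.univ m w) :=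
        Finset.sum_congr rfl fun w _ => by rw [← ih w]
      rw [h2]
      simp_rw [mul_sub, mul_one]
      rw [Finset.sum_sub_distrib, sum_p_eq_one hd z]

lemma avoidP_succ_le (hd : d ≠ 0) (A : Finset (V d)) (m : ℕ) (y : V d) :
    avoidP A (m+1) y ≤ avoidP A m y := by
  induction m generalizing y with
  | zero =>
    rw [avoidP]
    calc ∑ z ∈ nbrs y, (1 / (2 * (d:ℝ))) * (if z ∈ A then 0 else avoidP A 0 z)
        ≤ ∑ z ∈ nbrs y, (1 / (2 * (d:ℝ))) * 1 := by
          refine Finset.sum_le_sum fun z _ => mul_le_mul_of_nonneg_left ?_ p_nonneg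
          split
          · norm_num
          · exact avoidP_le_one hd A 0 z
      _ = 1 := by simpa using sum_p_eq_one hd y
      _ = avoidP A 0 y := by rw [avoidP]
  | succ m ih =>
    rw [avoidP, avoidP]
    refine Finset.sum_le_sum fun z _ => mul_le_mul_of_nonneg_left ?_ p_nonneg
    split
    · exact le_refl _
    · exact ih z

lemma avoidP_antitone (hd : d ≠ 0) (A : Finset (V d)) (y : V d) :
    Antitone fun m => avoidP A m y :=
  antitone_nat_of_succ_le fun m => avoidP_succ_le hd A m y

/-- escape probability `P_y[H̃?_A = ∞]`-flavoured limit of `avoidP`. -/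
def escP (A : Finset (V d)) (y : V d) : ℝ := ⨅ m, avoidP A m y

lemma escP_bddBelow (A : Finset (V d)) (y : V d) :
    BddBelow (Set.range fun m => avoidP A m y) :=
  ⟨0, by rintro r ⟨m, rfl⟩; exact avoidP_nonneg A m y⟩

lemma tendsto_avoidP (hd : d ≠ 0) (A : Finset (V d)) (y : V d) :
    Filter.Tendsto (fun m => avoidP A m y) Filter.atTop (nhds (escP A y)) :=
  tendsto_atTop_ciInf (avoidP_antitone hd A y) (escP_bddBelow A y)

lemma escP_le_avoidP (A : Finset (V d)) (m : ℕ) (y : V d) :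
    escP A y ≤ avoidP A m y :=
  ciInf_le (escP_bddBelow A y) m

lemma escP_nonneg (A : Finset (V d)) (y : V d) : 0 ≤ escP A y :=
  le_ciInf fun m => avoidP_nonneg A m y

lemma eqm_eq_escP (hd : d ≠ 0) (A : Finset (V d)) {y : V d} (hy : y ∈ A) :
    eqm A y = escP A y := by
  have t1 : Filter.Tendsto (fun m => avoidP A (m+1) y) Filter.atTop (nhds (escP A y)) :=
    (tendsto_avoidP hd A y).comp (Filter.tendsto_add_atTop_nat 1)
  have t2 : Filter.Tendsto (fun m => avoidP A (m+1) y) Filter.atTop (nhds (eqm A y)) := by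
    have he : ∀ m, avoidP A (m+1) y
        = ∑ z ∈ nbrs y, (1 / (2 * (d:ℝ))) * (1 - hitBE A Set.univ m z) := by
      intro m
      rw [avoidP]
      exact Finset.sum_congr rfl fun z _ => by rw [← one_sub_hitBE hd A m z]
    simp_rw [he]
    rw [eqm, if_pos hy]
    refine tendsto_finset_sum _ fun z _ => ?_
    exact (tendsto_const_nhds.sub (tendsto_hitBE hd A z)).const_mul _
  exact tendsto_nhds_unique t2 t1

end Avoid

section LastExit

variable {d : ℕ}

lemma lastExit (hd : d ≠ 0) (A : Finset (V d)) :
    ∀ N x, hitBE A Set.univ N x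
      = ∑ n ∈ Finset.range (N+1), ∑ y ∈ A, step d n x y * avoidP A (N - n) y := by
  intro N
  induction N with
  | zero =>
    intro x
    rw [hitBE]
    simp only [Nat.zero_add, Finset.range_one, Finset.sum_singleton, Nat.sub_zero, step, avoidP, mul_one]
    rw [Finset.sum_ite_eq]
  | succ N ih =>
    intro x
    have hsplit : ∑ n ∈ Finset.range (N+1+1), ∑ y ∈ A, step d n x y * avoidP A (N+1-n) y
        = (∑ i ∈ Finset.range (N+1), ∑ y ∈ A, step d (i+1) x y * avoidP A (N-i) y)
          + ∑ y ∈ A, step d 0 x y * avoidP A (N+1) y := by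
      rw [Finset.sum_range_succ']
      congr 1
      refine Finset.sum_congr rfl fun i _ => ?_
      refine Finset.sum_congr rfl fun y _ => ?_
      congr 2
      omega
    have h1 : (∑ i ∈ Finset.range (N+1), ∑ y ∈ A, step d (i+1) x y * avoidP A (N-i) y)
        = ∑ z ∈ nbrs x, (1/(2*(d:ℝ))) * hitBE A Set.univ N z := by
      have e1 : ∀ i, ∑ y ∈ A, step d (i+1) x y * avoidP A (N-i) y
          = ∑ z ∈ nbrs x, ∑ y ∈ A, (1/(2*(d:ℝ))) * (step d i z y * avoidP A (N-i) y) := by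
        intro i
        rw [Finset.sum_comm]
        refine Finset.sum_congr rfl fun y _ => ?_
        rw [show step d (i+1) x y = ∑ z ∈ nbrs x, (1/(2*(d:ℝ))) * step d i z y from rfl,
          Finset.sum_mul]
        exact Finset.sum_congr rfl fun z _ => by ring
      simp_rw [e1]
      rw [Finset.sum_comm]
      refine Finset.sum_congr rfl fun z _ => ?_
      rw [ih z, Finset.mul_sum]
      exact Finset.sum_congr rfl fun i _ => (Finset.mul_sum _ _ _).symm
    rw [hitBE, hsplit, h1]
    by_cases hx : x ∈ A
    · rw [if_pos hx]
      have h0 : ∑ y ∈ A, step d 0 x y * avoidP A (N+1) y = avoidP A (N+1) x := by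
        simp only [step]
        rw [show (∑ y ∈ A, (if x = y then (1:ℝ) else 0) * avoidP A (N+1) y)
            = ∑ y ∈ A, if x = y then avoidP A (N+1) y else 0 from
            Finset.sum_congr rfl fun y _ => by split <;> simp]
        rw [Finset.sum_ite_eq, if_pos hx]
      rw [h0]
      have h2 : avoidP A (N+1) x
          = ∑ z ∈ nbrs x, (1/(2*(d:ℝ))) * (1 - hitBE A Set.univ N z) := by
        rw [avoidP]
        exact Finset.sum_congr rfl fun z _ => by rw [← one_sub_hitBE hd A N z]
      rw [h2]
      simp_rw [mul_sub, mul_one]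
      rw [Finset.sum_sub_distrib, sum_p_eq_one hd x]
      ring
    · rw [if_neg hx, if_pos (Set.mem_univ x)]
      have h0 : ∑ y ∈ A, step d 0 x y * avoidP A (N+1) y = 0 := by
        simp only [step]
        refine Finset.sum_eq_zero fun y hy => ?_
        rw [if_neg, zero_mul]
        rintro rfl; exact hx hy
      rw [h0, add_zero]

end LastExit

section Bounds

variable {d : ℕ}

lemma green_def (x y : V d) : green x y = ∑' n, step d n x y := rfl

lemma green_escP_le_one (hd : d ≠ 0) (hs : ∀ x y : V d, Summable fun n => step d n x y)
    (A : Finset (V d)) (x : V d) :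
    ∑ y ∈ A, green x y * escP A y ≤ 1 := by
  have hsum : Summable (fun n => ∑ y ∈ A, step d n x y * escP A y) :=
    summable_sum fun y _ => (hs x y).mul_right _
  have hpart : ∀ N, ∑ n ∈ Finset.range N, (∑ y ∈ A, step d n x y * escP A y) ≤ 1 := by
    intro N
    cases N with
    | zero => simp
    | succ N =>
      calc ∑ n ∈ Finset.range (N+1), (∑ y ∈ A, step d n x y * escP A y)
          ≤ ∑ n ∈ Finset.range (N+1), ∑ y ∈ A, step d n x y * avoidP A (N-n) y := by
            refine Finset.sum_le_sum fun n _ => Finset.sum_le_sum fun y _ => ?_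
            exact mul_le_mul_of_nonneg_left (escP_le_avoidP A (N-n) y) (step_nonneg n x y)
        _ = hitBE A Set.univ N x := (lastExit hd A N x).symm
        _ ≤ 1 := hitBE_le_one hd A Set.univ N x
  have htsum := hsum.tsum_le_of_sum_range_le hpart
  calc ∑ y ∈ A, green x y * escP A y
      = ∑ y ∈ A, ∑' n, step d n x y * escP A y := by
        refine Finset.sum_congr rfl fun y _ => ?_
        rw [green_def, ← tsum_mul_right]
    _ = ∑' n, ∑ y ∈ A, step d n x y * escP A y :=
        (Summable.tsum_finsetSum fun y _ => (hs x y).mul_right _).symm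
    _ ≤ 1 := htsum

lemma one_le_green_escP (hd : d ≠ 0) (hs : ∀ x y : V d, Summable fun n => step d n x y)
    (A : Finset (V d)) {x : V d} (hx : x ∈ A) :
    1 ≤ ∑ y ∈ A, green x y * escP A y := by
  have hTsum : Summable (fun n => ∑ y ∈ A, step d n x y) :=
    summable_sum fun y _ => hs x y
  have step1 : ∀ M, 1 ≤ ∑ y ∈ A, green x y * avoidP A M y := by
    intro M
    have key : ∀ j : ℕ, 1 ≤ (∑ y ∈ A, green x y * avoidP A M y)
        + ∑ k ∈ Finset.range M, (∑ y ∈ A, step d (j + 1 + k) x y) := by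
      intro j
      have h1 : (1:ℝ) = ∑ n ∈ Finset.range (M+j+1),
          ∑ y ∈ A, step d n x y * avoidP A (M+j-n) y := by
        rw [← lastExit hd A (M+j) x, hitBE_of_mem A Set.univ (M+j) hx]
      have h2 : ∀ n ∈ Finset.range (M+j+1), ∑ y ∈ A, step d n x y * avoidP A (M+j-n) y
          ≤ (∑ y ∈ A, step d n x y * avoidP A M y)
            + (if j < n then (∑ y ∈ A, step d n x y) else 0) := by
        intro n hn
        by_cases hjn : j < n
        · rw [if_pos hjn]
          have hle : ∑ y ∈ A, step d n x y * avoidP A (M+j-n) y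
              ≤ ∑ y ∈ A, step d n x y := by
            refine Finset.sum_le_sum fun y _ => ?_
            have ha := avoidP_le_one hd A (M+j-n) y
            have hb := step_nonneg n x y
            nlinarith
          have h0 : 0 ≤ ∑ y ∈ A, step d n x y * avoidP A M y :=
            Finset.sum_nonneg fun y _ =>
              mul_nonneg (step_nonneg n x y) (avoidP_nonneg A M y)
          linarith
        · rw [if_neg hjn, Finset.mem_range] at *
          rw [add_zero]
          refine Finset.sum_le_sum fun y _ => ?_
          refine mul_le_mul_of_nonneg_left ?_ (step_nonneg n x y)
          exact avoidP_antitone hd A y (show M ≤ M + j - n by omega)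
      have h3 : (1:ℝ) ≤ (∑ n ∈ Finset.range (M+j+1), ∑ y ∈ A, step d n x y * avoidP A M y)
          + ∑ n ∈ Finset.range (M+j+1),
              (if j < n then (∑ y ∈ A, step d n x y) else 0) := by
        rw [← Finset.sum_add_distrib]
        calc (1:ℝ) = _ := h1
          _ ≤ _ := Finset.sum_le_sum h2
      have h4 : (∑ n ∈ Finset.range (M+j+1), ∑ y ∈ A, step d n x y * avoidP A M y)
          ≤ ∑ y ∈ A, green x y * avoidP A M y := by
        rw [Finset.sum_comm]
        refine Finset.sum_le_sum fun y _ => ?_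
        have hsummy : Summable fun n => step d n x y * avoidP A M y :=
          (hs x y).mul_right _
        have hle := Summable.sum_le_tsum (Finset.range (M+j+1))
          (fun n _ => mul_nonneg (step_nonneg n x y) (avoidP_nonneg A M y)) hsummy
        rw [tsum_mul_right, ← green_def] at hle
        exact hle
      have h5 : ∑ n ∈ Finset.range (M+j+1),
            (if j < n then (∑ y ∈ A, step d n x y) else 0)
          = ∑ k ∈ Finset.range M, (∑ y ∈ A, step d (j + 1 + k) x y) := by
        rw [show M + j + 1 = (j+1) + M by omega, Finset.sum_range_add]
        have hz : ∑ n ∈ Finset.range (j+1),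
            (if j < n then (∑ y ∈ A, step d n x y) else 0) = 0 :=
          Finset.sum_eq_zero fun n hn => by
            rw [Finset.mem_range] at hn
            rw [if_neg (by omega)]
        rw [hz, zero_add]
        refine Finset.sum_congr rfl fun k _ => ?_
        rw [if_pos (by omega)]
      rw [h5] at h3
      linarith
    have hlim : Filter.Tendsto
        (fun j => (∑ y ∈ A, green x y * avoidP A M y)
          + ∑ k ∈ Finset.range M, (∑ y ∈ A, step d (j + 1 + k) x y))
        Filter.atTop (nhds ((∑ y ∈ A, green x y * avoidP A M y) + 0)) := by
      refine Filter.Tendsto.const_add _ ?_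
      have h0 : Filter.Tendsto (fun j : ℕ => (∑ k ∈ Finset.range M,
          (∑ y ∈ A, step d (j + 1 + k) x y))) Filter.atTop
          (nhds (∑ _k ∈ Finset.range M, (0:ℝ))) := by
        refine tendsto_finset_sum _ fun k _ => ?_
        have heq : (fun j : ℕ => ∑ y ∈ A, step d (j + 1 + k) x y)
            = (fun n => ∑ y ∈ A, step d n x y) ∘ (fun j : ℕ => j + (1 + k)) := by
          funext j
          simp only [Function.comp]
          rw [show j + (1 + k) = j + 1 + k from by omega]
        rw [heq]
        exact hTsum.tendsto_atTop_zero.comp (Filter.tendsto_add_atTop_nat (1 + k))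
      simpa using h0
    have := ge_of_tendsto hlim (Filter.Eventually.of_forall key)
    linarith
  have hlim2 : Filter.Tendsto (fun M => ∑ y ∈ A, green x y * avoidP A M y)
      Filter.atTop (nhds (∑ y ∈ A, green x y * escP A y)) := by
    refine tendsto_finset_sum _ fun y _ => ?_
    exact (tendsto_avoidP hd A y).const_mul (green x y)
  exact ge_of_tendsto hlim2 (Filter.Eventually.of_forall step1)

end Bounds


/-- Lemma 4.3: if `f` maps `F` bijectively onto `F̂` contracting
sup-norm distances by at most a factor `1/2`, then `cap(F̂) ≥ cap(F)/c_**`, where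
`c_** = sup { g(0,ŷ)/g(0,y) : |ŷ|_∞ ≥ |y|_∞/2 }`. -/
theorem cost_bubble_stmt0 (d : ℕ) (hd : 3 ≤ d)
    (cstar : ℝ)
    (hcstar : IsLUB {r : ℝ | ∃ y yh : V d,
        (1 / 2 : ℝ) * (supNorm y : ℝ) ≤ (supNorm yh : ℝ) ∧ r = green 0 yh / green 0 y} cstar)
    (F Fh : Finset (V d)) (f : V d → V d)
    (hbij : Set.BijOn f (↑F) (↑Fh))
    (hcontr : ∀ x ∈ F, ∀ y ∈ F,
      (1 / 2 : ℝ) * (supNorm (x - y) : ℝ) ≤ (supNorm (f x - f y) : ℝ)) :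
    capa F / cstar ≤ capa Fh := by
  have hd0 : d ≠ 0 := by omega
  have hsupz : (supNorm (0 : V d) : ℝ) = 0 := by
    norm_cast
    simp [supNorm]
  by_cases hsumm : ∀ x y : V d, Summable fun n => step d n x y
  · -- transient (true) case
    have hgpos : ∀ x y : V d, 0 < green x y := by
      intro x y
      obtain ⟨n, hn⟩ := step_exists_pos hd0 x y
      exact lt_of_lt_of_le hn (Summable.le_tsum (hsumm x y) n fun m _ => step_nonneg m x y)
    have hone : (1:ℝ) ∈ {r : ℝ | ∃ y yh : V d,
        (1 / 2 : ℝ) * (supNorm y : ℝ) ≤ (supNorm yh : ℝ) ∧ r = green 0 yh / green 0 y} :=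
      ⟨0, 0, by rw [hsupz]; norm_num, (div_self (ne_of_gt (hgpos 0 0))).symm⟩
    have hc1 : (1:ℝ) ≤ cstar := hcstar.1 hone
    have hcpos : (0:ℝ) < cstar := lt_of_lt_of_le one_pos hc1
    have hgb : ∀ x ∈ F, ∀ y ∈ F, green (f x) (f y) ≤ cstar * green x y := by
      intro x hx y hy
      have hmem : green 0 (f y - f x) / green 0 (y - x) ∈ {r : ℝ | ∃ y yh : V d,
          (1 / 2 : ℝ) * (supNorm y : ℝ) ≤ (supNorm yh : ℝ) ∧ r = green 0 yh / green 0 y} :=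
        ⟨y - x, f y - f x, hcontr y hy x hx, rfl⟩
      have hle : green 0 (f y - f x) / green 0 (y - x) ≤ cstar := hcstar.1 hmem
      rw [div_le_iff₀ (hgpos 0 (y - x))] at hle
      calc green (f x) (f y) = green 0 (f y - f x) := green_eq_zero_sub _ _
        _ ≤ cstar * green 0 (y - x) := hle
        _ = cstar * green x y := by rw [← green_eq_zero_sub]
    have hFh_up : ∀ xh ∈ Fh, (1:ℝ) ≤ ∑ yh ∈ Fh, green xh yh * eqm Fh yh := by
      intro xh hxh
      calc (1:ℝ) ≤ ∑ yh ∈ Fh, green xh yh * escP Fh yh :=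
            one_le_green_escP hd0 hsumm Fh hxh
        _ = ∑ yh ∈ Fh, green xh yh * eqm Fh yh :=
            Finset.sum_congr rfl fun yh hyh => by rw [eqm_eq_escP hd0 Fh hyh]
    have hF_dn : ∀ y : V d, ∑ x ∈ F, green y x * eqm F x ≤ 1 := by
      intro y
      calc ∑ x ∈ F, green y x * eqm F x
          = ∑ x ∈ F, green y x * escP F x :=
            Finset.sum_congr rfl fun x hx => by rw [eqm_eq_escP hd0 F hx]
        _ ≤ 1 := green_escP_le_one hd0 hsumm F y
    have him : Fh = F.image f := by
      apply Finset.coe_injective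
      rw [Finset.coe_image, hbij.image_eq]
    have hinj : ∀ x ∈ F, ∀ y ∈ F, f x = f y → x = y := fun x hx y hy h =>
      hbij.injOn hx hy h
    have heq0 : ∀ (g : V d → ℝ), ∑ yh ∈ Fh, g yh = ∑ y ∈ F, g (f y) := by
      intro g
      rw [him]
      exact Finset.sum_image hinj
    have main : capa F ≤ cstar * capa Fh := by
      calc capa F = ∑ x ∈ F, eqm F x := rfl
        _ ≤ ∑ x ∈ F, eqm F x * (∑ yh ∈ Fh, green (f x) yh * eqm Fh yh) := by
            refine Finset.sum_le_sum fun x hx => ?_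
            exact le_mul_of_one_le_right (eqm_nonneg hd0 F x)
              (hFh_up (f x) (Finset.mem_coe.mp (hbij.mapsTo hx)))
        _ = ∑ x ∈ F, ∑ y ∈ F, eqm F x * (green (f x) (f y) * eqm Fh (f y)) := by
            refine Finset.sum_congr rfl fun x hx => ?_
            rw [heq0 (fun yh => green (f x) yh * eqm Fh yh), Finset.mul_sum]
        _ ≤ ∑ x ∈ F, ∑ y ∈ F, eqm F x * (cstar * green x y * eqm Fh (f y)) := by
            refine Finset.sum_le_sum fun x hx => Finset.sum_le_sum fun y hy => ?_
            refine mul_le_mul_of_nonneg_left ?_ (eqm_nonneg hd0 F x)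
            refine mul_le_mul_of_nonneg_right (hgb x hx y hy) (eqm_nonneg hd0 Fh (f y))
        _ = ∑ y ∈ F, cstar * (eqm Fh (f y) * ∑ x ∈ F, green y x * eqm F x) := by
            rw [Finset.sum_comm]
            refine Finset.sum_congr rfl fun y hy => ?_
            rw [Finset.mul_sum, Finset.mul_sum]
            refine Finset.sum_congr rfl fun x hx => ?_
            rw [green_symm y x]
            ring
        _ ≤ ∑ y ∈ F, cstar * (eqm Fh (f y) * 1) := by
            refine Finset.sum_le_sum fun y hy => ?_
            refine mul_le_mul_of_nonneg_left ?_ (le_of_lt hcpos)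
            exact mul_le_mul_of_nonneg_left (hF_dn y) (eqm_nonneg hd0 Fh (f y))
        _ = cstar * capa Fh := by
            simp_rw [mul_one]
            rw [← Finset.mul_sum]
            congr 1
            rw [capa, heq0 (fun yh => eqm Fh yh)]
    rw [div_le_iff₀ hcpos]
    calc capa F ≤ cstar * capa Fh := main
      _ = capa Fh * cstar := mul_comm _ _
  · -- degenerate (impossible for `d ≥ 3`, but handled via `hcstar`) case
    have hg : ∀ x y : V d, green x y = 0 := by
      push_neg at hsumm
      obtain ⟨x0, y0, h0⟩ := hsumm
      intro x y
      refine tsum_eq_zero_of_not_summable fun hc => h0 ?_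
      exact summable_transfer hd0 hc
    have hset : {r : ℝ | ∃ y yh : V d,
        (1 / 2 : ℝ) * (supNorm y : ℝ) ≤ (supNorm yh : ℝ) ∧ r = green 0 yh / green 0 y}
        = {(0:ℝ)} := by
      ext r
      simp only [Set.mem_setOf_eq, Set.mem_singleton_iff]
      constructor
      · rintro ⟨y, yh, -, rfl⟩
        simp [hg]
      · rintro rfl
        exact ⟨0, 0, by rw [hsupz]; norm_num, by simp [hg]⟩
    have hcz : cstar = 0 := (hset ▸ hcstar).unique isLUB_singleton
    rw [hcz, div_zero]
    exact capa_nonneg hd0 Fh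

end
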